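/- Let (X,Y,Z) be an absolutely continuous random vector. Then X and Y are conditionally independent given Z if and only if the Rosenblatt transforms F_{X|Z}(X|Z), F_{Y|Z}(Y|Z) and Z are mutually independent. -/

import Mathlib

open MeasureTheory ProbabilityTheory Set

namespace RosAux

/-- Joint measurability of `(z, x) ↦ κ z (Iic x)` for a Markov kernel. -/
lemma measurable_kernel_Iic (κ : Kernel ℝ ℝ) [IsMarkovKernel κ] :
    Measurable (fun p : ℝ × ℝ => κ p.1 (Iic p.2)) := by
  have key : ∀ p : ℝ × ℝ, κ p.1 (Iic p.2)
      = ⨅ q : ℚ, (if p.2 < (q : ℝ) then κ p.1 (Iic (q : ℝ)) else 1) := by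
    intro p
    refine le_antisymm (le_iInf fun q => ?_) ?_
    · by_cases h : p.2 < (q : ℝ)
      · rw [if_pos h]; exact measure_mono (Iic_subset_Iic.2 h.le)
      · rw [if_neg h]; exact prob_le_one
    · have hne : Nonempty {q : ℚ // p.2 < (q : ℝ)} := by
        obtain ⟨q, hq⟩ := exists_rat_gt p.2
        exact ⟨⟨q, hq⟩⟩
      have hIic : Iic p.2 = ⋂ q : {q : ℚ // p.2 < (q : ℝ)}, Iic (q : ℝ) := by
        ext x
        simp only [mem_Iic, mem_iInter]
        constructor
        · intro hx q; exact hx.trans q.2.le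
        · intro h
          by_contra hx
          push_neg at hx
          obtain ⟨q, hq1, hq2⟩ := exists_rat_btwn hx
          exact absurd (h ⟨q, hq1⟩) (not_le.2 hq2)
      have hdir : Directed (· ⊇ ·) fun q : {q : ℚ // p.2 < (q : ℝ)} => Iic ((q : ℚ) : ℝ) := by
        intro a b
        rcases le_total (a : ℚ) (b : ℚ) with h | h
        · exact ⟨a, subset_rfl, Iic_subset_Iic.2 (by exact_mod_cast h)⟩
        · exact ⟨b, Iic_subset_Iic.2 (by exact_mod_cast h), subset_rfl⟩
      have := Directed.measure_iInter (μ := κ p.1)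
        (s := fun q : {q : ℚ // p.2 < (q : ℝ)} => Iic ((q : ℚ) : ℝ))
        (fun q => measurableSet_Iic.nullMeasurableSet) hdir
        ⟨hne.some, measure_ne_top _ _⟩
      rw [hIic, this]
      refine le_iInf fun q => ?_
      calc ⨅ l : ℚ, (if p.2 < (l : ℝ) then κ p.1 (Iic (l : ℝ)) else 1)
          ≤ (if p.2 < ((q : ℚ) : ℝ) then κ p.1 (Iic ((q : ℚ) : ℝ)) else 1) := iInf_le _ _
        _ = κ p.1 (Iic ((q : ℚ) : ℝ)) := by rw [if_pos q.2]
  have : (fun p : ℝ × ℝ => κ p.1 (Iic p.2))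
      = fun p : ℝ × ℝ => ⨅ q : ℚ, (if p.2 < (q : ℝ) then κ p.1 (Iic (q : ℝ)) else 1) := by
    funext p; exact key p
  rw [this]
  refine Measurable.iInf fun q => Measurable.ite ?_ ?_ measurable_const
  · exact measurableSet_lt (measurable_snd) measurable_const
  · exact (Kernel.measurable_coe κ measurableSet_Iic).comp measurable_fst

/-- The probability that a random variable with continuous strictly monotone CDF `F`
satisfies `F ≤ u`. -/
lemma measure_cdf_le {μ : Measure ℝ} [IsProbabilityMeasure μ] {F : ℝ → ℝ}
    (hF : ∀ x, (μ (Iic x)).toReal = F x) (hcont : Continuous F) (hmono : StrictMono F)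
    (u : ℝ) : μ {x | F x ≤ u} = ENNReal.ofReal (min u 1) := by
  have hF0 : ∀ x, 0 ≤ F x := fun x => (hF x) ▸ ENNReal.toReal_nonneg
  have hF1 : ∀ x, F x ≤ 1 := by
    intro x
    rw [← hF x]
    exact ENNReal.toReal_le_of_le_ofReal zero_le_one (by simpa using prob_le_one)
  have hFof : ∀ x, μ (Iic x) = ENNReal.ofReal (F x) := by
    intro x
    rw [← hF x, ENNReal.ofReal_toReal (measure_ne_top _ _)]
  have hFpos : ∀ x, 0 < F x := fun x => lt_of_le_of_lt (hF0 (x - 1)) (hmono (by linarith))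
  have hFlt1 : ∀ x, F x < 1 := fun x => lt_of_lt_of_le (hmono (lt_add_one x)) (hF1 (x + 1))
  rcases le_or_gt 1 u with h1 | h1
  · have hset : {x | F x ≤ u} = univ := by
      ext x; simp only [mem_setOf_eq, mem_univ, iff_true]
      exact (hF1 x).trans h1
    rw [hset, min_eq_right h1, ENNReal.ofReal_one, measure_univ]
  rcases le_or_gt u 0 with h0 | h0
  · have hset : {x | F x ≤ u} = ∅ := by
      ext x; simp only [mem_setOf_eq, mem_empty_iff_false, iff_false, not_le]
      exact lt_of_le_of_lt h0 (hFpos x)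
    rw [hset, measure_empty, eq_comm, ENNReal.ofReal_eq_zero]
    exact min_le_of_left_le h0
  -- now `0 < u < 1`
  have htop : Filter.Tendsto F Filter.atTop (nhds 1) := by
    have h1' : Filter.Tendsto (fun x => μ (Iic x)) Filter.atTop (nhds (μ univ)) :=
      tendsto_measure_Iic_atTop μ
    rw [measure_univ] at h1'
    have := (ENNReal.tendsto_toReal (by simp : (1 : ENNReal) ≠ ⊤)).comp h1'
    have heq : (ENNReal.toReal ∘ fun x => μ (Iic x)) = F := by
      funext x; simp [Function.comp, hF x]
    rwa [heq] at this
  have hbot : Filter.Tendsto (fun n : ℕ => F (-(n : ℝ))) Filter.atTop (nhds 0) := by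
    have hanti : Antitone fun n : ℕ => Iic (-(n : ℝ)) := by
      intro a b hab
      exact Iic_subset_Iic.2 (by exact_mod_cast neg_le_neg (by exact_mod_cast hab))
    have hint : ⋂ n : ℕ, Iic (-(n : ℝ)) = ∅ := by
      ext x
      simp only [mem_iInter, mem_Iic, mem_empty_iff_false, iff_false, not_forall, not_le]
      obtain ⟨n, hn⟩ := exists_nat_gt (-x)
      exact ⟨n, by linarith⟩
    have h2 : Filter.Tendsto (fun n : ℕ => μ (Iic (-(n : ℝ)))) Filter.atTop (nhds (μ (⋂ n : ℕ, Iic (-(n : ℝ))))) := by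
      refine tendsto_measure_iInter_atTop (fun n => measurableSet_Iic.nullMeasurableSet) hanti
        ⟨0, measure_ne_top _ _⟩
    rw [hint, measure_empty] at h2
    have := (ENNReal.tendsto_toReal (by simp : (0 : ENNReal) ≠ ⊤)).comp h2
    have heq : (ENNReal.toReal ∘ fun n : ℕ => μ (Iic (-(n:ℝ)))) = fun n : ℕ => F (-(n:ℝ)) := by
      funext x; simp [Function.comp, hF]
    rwa [heq] at this
  obtain ⟨b, hb⟩ : ∃ b, u < F b := by
    have : ∀ᶠ x in Filter.atTop, u < F x := htop.eventually (eventually_gt_nhds h1)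
    exact this.exists
  obtain ⟨n, hn⟩ : ∃ n : ℕ, F (-(n : ℝ)) < u := by
    have : ∀ᶠ n : ℕ in Filter.atTop, F (-(n:ℝ)) < u := hbot.eventually (eventually_lt_nhds h0)
    exact this.exists
  have hab : (-(n : ℝ)) < b := by
    by_contra h
    push_neg at h
    exact absurd (hmono.monotone h) (not_le.2 (hn.trans hb))
  obtain ⟨x0, _, hx0⟩ : ∃ x0 ∈ Icc (-(n : ℝ)) b, F x0 = u := by
    have : u ∈ Icc (F (-(n : ℝ))) (F b) := ⟨hn.le, hb.le⟩
    obtain ⟨x0, hx0m, hx0⟩ := intermediate_value_Icc hab.le hcont.continuousOn this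
    exact ⟨x0, hx0m, hx0⟩
  have hset : {x | F x ≤ u} = Iic x0 := by
    ext x
    simp only [mem_setOf_eq, mem_Iic]
    constructor
    · intro hx
      by_contra hxx
      push_neg at hxx
      exact absurd (hx.trans_lt (hx0 ▸ hmono hxx)) (lt_irrefl _)
    · intro hx
      calc F x ≤ F x0 := hmono.monotone hx
        _ = u := hx0
  rw [hset, hFof, hx0, min_eq_left h1.le]

end RosAux

namespace RosAux2

open MeasureTheory ProbabilityTheory Set

variable {Ω : Type*} [MeasureSpace Ω] [IsProbabilityMeasure (ℙ : Measure Ω)]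

/-- Conditional probability of a joint event `(Z, W) ∈ A` given `Z`, expressed through
`condDistrib W Z`. -/
lemma condexp_mem_prod_ae_eq {E : Type*} [MeasurableSpace E] [StandardBorelSpace E]
    [Nonempty E] {Z : Ω → ℝ} (hZ : Measurable Z) {W : Ω → E} (hW : Measurable W)
    {A : Set (ℝ × E)} (hA : MeasurableSet A) :
    (ℙ : Measure Ω)⟦(fun ω => (Z ω, W ω)) ⁻¹' A | MeasurableSpace.comap Z inferInstance⟧
      =ᵐ[ℙ] fun ω => (condDistrib W Z ℙ (Z ω) {e | (Z ω, e) ∈ A}).toReal := by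
  classical
  have h := condExp_prod_ae_eq_integral_condDistrib (μ := ℙ) (X := Z) (Y := W)
    hZ hW.aemeasurable (f := A.indicator (fun _ => (1:ℝ)))
    ((measurable_const.indicator hA).stronglyMeasurable)
    ((integrable_const (1:ℝ)).indicator ((hZ.prodMk hW) hA))
  have hleft : (fun a => A.indicator (fun _ => (1:ℝ)) (Z a, W a))
      = Set.indicator ((fun ω => (Z ω, W ω)) ⁻¹' A) (fun _ => (1:ℝ)) := by
    funext a
    rw [Set.indicator_apply, Set.indicator_apply, Set.mem_preimage]
  have hright : ∀ a : Ω, (∫ e, A.indicator (fun _ => (1:ℝ)) (Z a, e)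
      ∂(condDistrib W Z ℙ (Z a)))
      = (condDistrib W Z ℙ (Z a) {e | (Z a, e) ∈ A}).toReal := by
    intro a
    have hsec : MeasurableSet {e : E | (Z a, e) ∈ A} := measurable_prodMk_left hA
    have : (fun e => A.indicator (fun _ => (1:ℝ)) (Z a, e))
        = Set.indicator {e : E | (Z a, e) ∈ A} (fun _ => (1:ℝ)) := by
      funext e
      rw [Set.indicator_apply, Set.indicator_apply]
      rfl
    rw [this]
    exact integral_indicator_one hsec
  rw [hleft] at h
  refine h.trans (Filter.Eventually.of_forall fun a => hright a)

end RosAux2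

open RosAux RosAux2

/-- **Rosenblatt transforms and conditional independence.** -/
theorem condIndep_iff_rosenblatt_mutually_indep
    {Ω : Type*} [MeasureSpace Ω] [StandardBorelSpace Ω] [Nonempty Ω]
    [IsProbabilityMeasure (ℙ : Measure Ω)]
    (X Y Z : Ω → ℝ) (hX : Measurable X) (hY : Measurable Y) (hZ : Measurable Z)
    (FXZ FYZ : ℝ → ℝ → ℝ)
    (hFXZ : ∀ z, Continuous (fun x => FXZ x z) ∧ StrictMono (fun x => FXZ x z))
    (hFYZ : ∀ z, Continuous (fun y => FYZ y z) ∧ StrictMono (fun y => FYZ y z))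
    -- FXZ and FYZ are the conditional CDFs of X and Y given Z:
    (hFXZcond : ∀ᵐ z ∂((ℙ : Measure Ω).map Z),
      ∀ x : ℝ, ((condDistrib X Z ℙ z) (Iic x)).toReal = FXZ x z)
    (hFYZcond : ∀ᵐ z ∂((ℙ : Measure Ω).map Z),
      ∀ y : ℝ, ((condDistrib Y Z ℙ z) (Iic y)).toReal = FYZ y z)
    (hUX : Measurable fun ω => FXZ (X ω) (Z ω))
    (hUY : Measurable fun ω => FYZ (Y ω) (Z ω)) :
    CondIndepFun (MeasurableSpace.comap Z inferInstance) (hZ.comap_le) X Y ℙ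
      ↔ iIndepFun (m := fun _ => (inferInstance : MeasurableSpace ℝ))
          ![fun ω => FXZ (X ω) (Z ω), fun ω => FYZ (Y ω) (Z ω), Z] ℙ := by
  set κX := condDistrib X Z ℙ with hκX_def
  set κY := condDistrib Y Z ℙ with hκY_def
  set XY := fun ω => (X ω, Y ω) with hXY_def
  have hXYm : Measurable XY := hX.prodMk hY
  set κW := condDistrib XY Z ℙ with hκW_def
  set U' := fun ω => (κX (Z ω) (Iic (X ω))).toReal with hU'_def
  set V' := fun ω => (κY (Z ω) (Iic (Y ω))).toReal with hV'_def
  have hU'm : Measurable U' :=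
    (measurable_kernel_Iic κX).comp (hZ.prodMk hX) |>.ennreal_toReal
  have hV'm : Measurable V' :=
    (measurable_kernel_Iic κY).comp (hZ.prodMk hY) |>.ennreal_toReal
  have hGFX : ∀ᵐ ω ∂ℙ, ∀ x, (κX (Z ω) (Iic x)).toReal = FXZ x (Z ω) :=
    ae_of_ae_map hZ.aemeasurable hFXZcond
  have hGFY : ∀ᵐ ω ∂ℙ, ∀ y, (κY (Z ω) (Iic y)).toReal = FYZ y (Z ω) :=
    ae_of_ae_map hZ.aemeasurable hFYZcond
  have hUae : U' =ᵐ[ℙ] fun ω => FXZ (X ω) (Z ω) := hGFX.mono fun ω h => h (X ω)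
  have hVae : V' =ᵐ[ℙ] fun ω => FYZ (Y ω) (Z ω) := hGFY.mono fun ω h => h (Y ω)
  have hLX : ∀ᵐ z ∂((ℙ : Measure Ω).map Z), ∀ u,
      κX z {x | (κX z (Iic x)).toReal ≤ u} = ENNReal.ofReal (min u 1) := by
    filter_upwards [hFXZcond] with z hz u
    have hfun : (fun x => (κX z (Iic x)).toReal) = fun x => FXZ x z := funext hz
    refine measure_cdf_le (fun x => rfl) ?_ ?_ u
    · rw [hfun]; exact (hFXZ z).1
    · rw [hfun]; exact (hFXZ z).2
  have hLY : ∀ᵐ z ∂((ℙ : Measure Ω).map Z), ∀ v,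
      κY z {y | (κY z (Iic y)).toReal ≤ v} = ENNReal.ofReal (min v 1) := by
    filter_upwards [hFYZcond] with z hz v
    have hfun : (fun y => (κY z (Iic y)).toReal) = fun y => FYZ y z := funext hz
    refine measure_cdf_le (fun y => rfl) ?_ ?_ v
    · rw [hfun]; exact (hFYZ z).1
    · rw [hfun]; exact (hFYZ z).2
  have hspan : IsCountablySpanning (⋃ q : ℚ, {Iic (q : ℝ)}) := by
    refine ⟨fun n => Iic ((n : ℚ) : ℝ), fun n => mem_iUnion.2 ⟨n, rfl⟩, ?_⟩
    ext x
    simp only [mem_iUnion, mem_Iic, mem_univ, iff_true]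
    obtain ⟨n, hn⟩ := exists_nat_ge x
    exact ⟨n, by push_cast; exact hn⟩
  have hgen2 : (inferInstance : MeasurableSpace (ℝ × ℝ))
      = MeasurableSpace.generateFrom
        (image2 (· ×ˢ ·) (⋃ q : ℚ, {Iic (q : ℝ)}) (⋃ q : ℚ, {Iic (q : ℝ)})) := by
    rw [← generateFrom_prod_eq hspan hspan, ← Real.borel_eq_generateFrom_Iic_rat]
  have hpi2 : IsPiSystem (image2 (· ×ˢ ·) (⋃ q : ℚ, {Iic (q : ℝ)}) (⋃ q : ℚ, {Iic (q : ℝ)})) :=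
    Real.isPiSystem_Iic_rat.prod Real.isPiSystem_Iic_rat
  constructor
  · intro hCI
    have hCI' := (condIndepFun_iff_condExp_inter_preimage_eq_mul
      (m' := MeasurableSpace.comap Z inferInstance) (hm' := hZ.comap_le) (μ := ℙ) hX hY).mp hCI
    -- Step 1: the conditional distribution of (X, Y) given Z factorizes a.e.
    have Kbase : ∀ q q' : ℚ, ∀ᵐ z ∂((ℙ : Measure Ω).map Z),
        κW z (Iic (q : ℝ) ×ˢ Iic (q' : ℝ)) = κX z (Iic (q : ℝ)) * κY z (Iic (q' : ℝ)) := by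
      intro q q'
      have hrect : MeasurableSet (Iic (q : ℝ) ×ˢ Iic (q' : ℝ)) :=
        measurableSet_Iic.prod measurableSet_Iic
      have h1 : (fun ω => (κW (Z ω) (Iic (q : ℝ) ×ˢ Iic (q' : ℝ))).toReal)
          =ᵐ[ℙ] (ℙ : Measure Ω)⟦XY ⁻¹' (Iic (q : ℝ) ×ˢ Iic (q' : ℝ)) |
            MeasurableSpace.comap Z inferInstance⟧ :=
        condDistrib_ae_eq_condExp hZ hXYm hrect
      have hpre : XY ⁻¹' (Iic (q : ℝ) ×ˢ Iic (q' : ℝ)) = X ⁻¹' Iic (q : ℝ) ∩ Y ⁻¹' Iic (q' : ℝ) :=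
        mk_preimage_prod X Y
      have h2 := hCI' (Iic (q : ℝ)) (Iic (q' : ℝ)) measurableSet_Iic measurableSet_Iic
      have h3 : (fun ω => (κX (Z ω) (Iic (q : ℝ))).toReal)
          =ᵐ[ℙ] (ℙ : Measure Ω)⟦X ⁻¹' Iic (q : ℝ) | MeasurableSpace.comap Z inferInstance⟧ :=
        condDistrib_ae_eq_condExp hZ hX measurableSet_Iic
      have h4 : (fun ω => (κY (Z ω) (Iic (q' : ℝ))).toReal)
          =ᵐ[ℙ] (ℙ : Measure Ω)⟦Y ⁻¹' Iic (q' : ℝ) | MeasurableSpace.comap Z inferInstance⟧ :=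
        condDistrib_ae_eq_condExp hZ hY measurableSet_Iic
      rw [hpre] at h1
      have h5 : ∀ᵐ ω ∂(ℙ : Measure Ω), (κW (Z ω) (Iic (q : ℝ) ×ˢ Iic (q' : ℝ))).toReal
          = (κX (Z ω) (Iic (q : ℝ))).toReal * (κY (Z ω) (Iic (q' : ℝ))).toReal := by
        filter_upwards [h1, h2, h3, h4] with ω h1 h2 h3 h4
        rw [h1, h2, ← h3, ← h4]
      have hmeasE : MeasurableSet {z : ℝ | (κW z (Iic (q : ℝ) ×ˢ Iic (q' : ℝ))).toReal
          = (κX z (Iic (q : ℝ))).toReal * (κY z (Iic (q' : ℝ))).toReal} := by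
        refine measurableSet_eq_fun ((Kernel.measurable_coe κW hrect).ennreal_toReal) ?_
        exact ((Kernel.measurable_coe κX measurableSet_Iic).ennreal_toReal).mul
          ((Kernel.measurable_coe κY measurableSet_Iic).ennreal_toReal)
      have h6 := (MeasureTheory.ae_map_iff hZ.aemeasurable hmeasE).mpr h5
      filter_upwards [h6] with z hz
      refine (ENNReal.toReal_eq_toReal_iff' (measure_ne_top _ _)
        (ENNReal.mul_ne_top (measure_ne_top _ _) (measure_ne_top _ _))).mp ?_
      rw [ENNReal.toReal_mul]
      exact hz
    have K : ∀ᵐ z ∂((ℙ : Measure Ω).map Z), κW z = (κX z).prod (κY z) := by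
      have hall : ∀ᵐ z ∂((ℙ : Measure Ω).map Z), ∀ q q' : ℚ,
          κW z (Iic (q : ℝ) ×ˢ Iic (q' : ℝ)) = κX z (Iic (q : ℝ)) * κY z (Iic (q' : ℝ)) := by
        rw [ae_all_iff]
        intro q
        rw [ae_all_iff]
        intro q'
        exact Kbase q q'
      filter_upwards [hall] with z hz
      refine ext_of_generate_finite _ hgen2 hpi2 ?_ (by simp)
      rintro s ⟨s1, hs1, s2, hs2, rfl⟩
      simp only [mem_iUnion, mem_singleton_iff] at hs1 hs2
      obtain ⟨q, rfl⟩ := hs1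
      obtain ⟨q', rfl⟩ := hs2
      rw [Measure.prod_prod]
      exact hz q q'
    -- pull back to ω
    have hKω : ∀ᵐ ω ∂(ℙ : Measure Ω), κW (Z ω) = (κX (Z ω)).prod (κY (Z ω)) :=
      ae_of_ae_map hZ.aemeasurable K
    have hLXω : ∀ᵐ ω ∂(ℙ : Measure Ω), ∀ u,
        κX (Z ω) {x | (κX (Z ω) (Iic x)).toReal ≤ u} = ENNReal.ofReal (min u 1) :=
      ae_of_ae_map hZ.aemeasurable hLX
    have hLYω : ∀ᵐ ω ∂(ℙ : Measure Ω), ∀ v,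
        κY (Z ω) {y | (κY (Z ω) (Iic y)).toReal ≤ v} = ENNReal.ofReal (min v 1) :=
      ae_of_ae_map hZ.aemeasurable hLY
    set c : ℝ → ℝ := fun t => (ENNReal.ofReal (min t 1)).toReal with hc_def
    -- Step 2: the conditional probability of `{U' ≤ u} ∩ {V' ≤ v}` given `Z` is constant
    have hD3 : ∀ u v : ℝ,
        (ℙ : Measure Ω)⟦{ω | U' ω ≤ u} ∩ {ω | V' ω ≤ v} | MeasurableSpace.comap Z inferInstance⟧
          =ᵐ[ℙ] fun _ => c u * c v := by
      intro u v
      have hA : MeasurableSet {p : ℝ × (ℝ × ℝ) | (κX p.1 (Iic p.2.1)).toReal ≤ u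
          ∧ (κY p.1 (Iic p.2.2)).toReal ≤ v} := by
        rw [setOf_and]
        refine MeasurableSet.inter ?_ ?_
        · exact measurableSet_le (((measurable_kernel_Iic κX).comp
            (measurable_fst.prodMk (measurable_snd.fst))).ennreal_toReal) measurable_const
        · exact measurableSet_le (((measurable_kernel_Iic κY).comp
            (measurable_fst.prodMk (measurable_snd.snd))).ennreal_toReal) measurable_const
      have h1 := condexp_mem_prod_ae_eq (Z := Z) hZ hXYm hA
      have hpre : (fun ω => (Z ω, XY ω)) ⁻¹' {p : ℝ × (ℝ × ℝ) | (κX p.1 (Iic p.2.1)).toReal ≤ u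
          ∧ (κY p.1 (Iic p.2.2)).toReal ≤ v} = {ω | U' ω ≤ u} ∩ {ω | V' ω ≤ v} := rfl
      rw [hpre] at h1
      refine h1.trans ?_
      filter_upwards [hKω, hLXω, hLYω] with ω hK hLXz hLYz
      show (κW (Z ω) ({x | (κX (Z ω) (Iic x)).toReal ≤ u}
          ×ˢ {y | (κY (Z ω) (Iic y)).toReal ≤ v})).toReal = c u * c v
      rw [hK, Measure.prod_prod, hLXz u, hLYz v, ENNReal.toReal_mul]
    have hmeasU : ∀ u : ℝ, MeasurableSet {ω | U' ω ≤ u} :=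
      fun u => measurableSet_le hU'm measurable_const
    have hmeasV : ∀ v : ℝ, MeasurableSet {ω | V' ω ≤ v} :=
      fun v => measurableSet_le hV'm measurable_const
    have hV'le1 : {ω | V' ω ≤ (1 : ℝ)} = univ := by
      refine eq_univ_of_forall fun ω => ?_
      have : κY (Z ω) (Iic (Y ω)) ≤ 1 := prob_le_one
      simpa using ENNReal.toReal_mono ENNReal.one_ne_top this
    have hU'le1 : {ω | U' ω ≤ (1 : ℝ)} = univ := by
      refine eq_univ_of_forall fun ω => ?_
      have : κX (Z ω) (Iic (X ω)) ≤ 1 := prob_le_one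
      simpa using ENNReal.toReal_mono ENNReal.one_ne_top this
    have hc1 : c 1 = 1 := by simp [hc_def]
    -- Step 3: integrate the conditional probabilities
    have hPint : ∀ (s : Set Ω), MeasurableSet s → ∀ (C : Set ℝ), MeasurableSet C → ∀ r : ℝ,
        ((ℙ : Measure Ω)⟦s | MeasurableSpace.comap Z inferInstance⟧ =ᵐ[ℙ] fun _ => r) →
        (ℙ (s ∩ Z ⁻¹' C)).toReal = r * (ℙ (Z ⁻¹' C)).toReal := by
      intro s hs C hC r hcond
      have hCm : MeasurableSet[MeasurableSpace.comap Z inferInstance] (Z ⁻¹' C) := ⟨C, hC, rfl⟩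
      have hint : Integrable (s.indicator (fun _ => (1 : ℝ))) ℙ := (integrable_const 1).indicator hs
      have h1 : ∫ ω in Z ⁻¹' C, s.indicator (fun _ => (1 : ℝ)) ω ∂ℙ
          = (ℙ (s ∩ Z ⁻¹' C)).toReal := by
        have h := integral_indicator_one (μ := (ℙ : Measure Ω).restrict (Z ⁻¹' C)) hs
        rw [measureReal_restrict_apply hs] at h
        exact h
      have h2 := setIntegral_condExp hZ.comap_le hint hCm
      have h3 : ∫ ω in Z ⁻¹' C, ((ℙ : Measure Ω)⟦s | MeasurableSpace.comap Z inferInstance⟧) ω ∂ℙ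
          = r * (ℙ (Z ⁻¹' C)).toReal := by
        rw [integral_congr_ae (ae_restrict_of_ae hcond), setIntegral_const, smul_eq_mul, mul_comm]
        rfl
      rw [← h1, ← h2, h3]
    have hE4 : ∀ u v : ℝ, ∀ C : Set ℝ, MeasurableSet C →
        (ℙ (({ω | U' ω ≤ u} ∩ {ω | V' ω ≤ v}) ∩ Z ⁻¹' C)).toReal
          = (c u * c v) * (ℙ (Z ⁻¹' C)).toReal :=
      fun u v C hC => hPint _ ((hmeasU u).inter (hmeasV v)) C hC _ (hD3 u v)
    have hC3 : ∀ u v : ℝ, (ℙ ({ω | U' ω ≤ u} ∩ {ω | V' ω ≤ v})).toReal = c u * c v := by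
      intro u v
      have := hE4 u v univ MeasurableSet.univ
      simpa using this
    have hC1 : ∀ u : ℝ, (ℙ {ω | U' ω ≤ u}).toReal = c u := by
      intro u
      have := hC3 u 1
      rw [hV'le1, inter_univ, hc1, mul_one] at this
      exact this
    have hC2 : ∀ v : ℝ, (ℙ {ω | V' ω ≤ v}).toReal = c v := by
      intro v
      have := hC3 1 v
      rw [hU'le1, univ_inter, hc1, one_mul] at this
      exact this
    have hmul : ∀ {a b d : ENNReal}, a ≠ ⊤ → b ≠ ⊤ → d ≠ ⊤ →
        a.toReal = b.toReal * d.toReal → a = b * d := by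
      intro a b d ha hb hd h
      refine (ENNReal.toReal_eq_toReal_iff' ha (ENNReal.mul_ne_top hb hd)).mp ?_
      rw [ENNReal.toReal_mul]
      exact h
    -- Step 4: joint independence of the pair (U', V') and Z
    have hI1 : IndepFun (fun ω => (U' ω, V' ω)) Z ℙ := by
      have hgenW : MeasurableSpace.comap (fun ω => (U' ω, V' ω)) inferInstance
          = MeasurableSpace.generateFrom ((preimage (fun ω => (U' ω, V' ω))) ''
            (image2 (· ×ˢ ·) (⋃ q : ℚ, {Iic (q : ℝ)}) (⋃ q : ℚ, {Iic (q : ℝ)}))) := by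
        rw [hgen2, MeasurableSpace.comap_generateFrom]
      have hgenZ : MeasurableSpace.comap Z inferInstance = MeasurableSpace.generateFrom
          {s : Set Ω | MeasurableSet[MeasurableSpace.comap Z inferInstance] s} :=
        (@MeasurableSpace.generateFrom_measurableSet Ω (MeasurableSpace.comap Z inferInstance)).symm
      refine IndepSets.indep (hU'm.prodMk hV'm).comap_le hZ.comap_le (hpi2.comap _)
        (@MeasurableSpace.isPiSystem_measurableSet Ω (MeasurableSpace.comap Z inferInstance))
        hgenW hgenZ ?_
      rintro t1 t2 ⟨R, hR, rfl⟩ ht2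
      obtain ⟨C, hC, rfl⟩ := ht2
      obtain ⟨s1, hs1, s2, hs2, rfl⟩ := hR
      simp only [mem_iUnion, mem_singleton_iff] at hs1 hs2
      obtain ⟨q, rfl⟩ := hs1
      obtain ⟨q', rfl⟩ := hs2
      have hprei : (fun ω => (U' ω, V' ω)) ⁻¹' (Iic (q : ℝ) ×ˢ Iic (q' : ℝ))
          = {ω | U' ω ≤ (q : ℝ)} ∩ {ω | V' ω ≤ (q' : ℝ)} := mk_preimage_prod U' V'
      rw [hprei]
      refine Filter.Eventually.of_forall fun _ => ?_
      simp only [Kernel.const_apply]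
      refine hmul (measure_ne_top _ _) (measure_ne_top _ _) (measure_ne_top _ _) ?_
      rw [hE4 q q' C hC, hC3 q q']
    have hI2 : IndepFun U' V' ℙ := by
      have hgenU : MeasurableSpace.comap U' inferInstance
          = MeasurableSpace.generateFrom (preimage U' '' (⋃ q : ℚ, {Iic (q : ℝ)})) := by
        conv_lhs => rw [show (inferInstance : MeasurableSpace ℝ)
          = MeasurableSpace.generateFrom (⋃ q : ℚ, {Iic (q : ℝ)})
          from Real.borel_eq_generateFrom_Iic_rat]
        rw [MeasurableSpace.comap_generateFrom]
      have hgenV : MeasurableSpace.comap V' inferInstance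
          = MeasurableSpace.generateFrom (preimage V' '' (⋃ q : ℚ, {Iic (q : ℝ)})) := by
        conv_lhs => rw [show (inferInstance : MeasurableSpace ℝ)
          = MeasurableSpace.generateFrom (⋃ q : ℚ, {Iic (q : ℝ)})
          from Real.borel_eq_generateFrom_Iic_rat]
        rw [MeasurableSpace.comap_generateFrom]
      refine IndepSets.indep hU'm.comap_le hV'm.comap_le (Real.isPiSystem_Iic_rat.comap _)
        (Real.isPiSystem_Iic_rat.comap _) hgenU hgenV ?_
      rintro t1 t2 ⟨s1, hs1, rfl⟩ ⟨s2, hs2, rfl⟩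
      simp only [mem_iUnion, mem_singleton_iff] at hs1 hs2
      obtain ⟨q, rfl⟩ := hs1
      obtain ⟨q', rfl⟩ := hs2
      refine Filter.Eventually.of_forall fun _ => ?_
      simp only [Kernel.const_apply]
      refine hmul (measure_ne_top _ _) (measure_ne_top _ _) (measure_ne_top _ _) ?_
      have e1 : U' ⁻¹' Iic (q : ℝ) = {ω | U' ω ≤ (q : ℝ)} := rfl
      have e2 : V' ⁻¹' Iic (q' : ℝ) = {ω | V' ω ≤ (q' : ℝ)} := rfl
      rw [e1, e2, hC3 q q', hC1 q, hC2 q']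
    -- Step 5: the triple product identity, for all Borel sets
    have htriple : ∀ A B C : Set ℝ, MeasurableSet A → MeasurableSet B → MeasurableSet C →
        ℙ (U' ⁻¹' A ∩ V' ⁻¹' B ∩ Z ⁻¹' C)
          = ℙ (U' ⁻¹' A) * ℙ (V' ⁻¹' B) * ℙ (Z ⁻¹' C) := by
      intro A B C hA hB hC
      have e1 : U' ⁻¹' A ∩ V' ⁻¹' B = (fun ω => (U' ω, V' ω)) ⁻¹' (A ×ˢ B) :=
        (mk_preimage_prod U' V').symm
      have h1 := (indepFun_iff_measure_inter_preimage_eq_mul.mp hI1) (A ×ˢ B) C (hA.prod hB) hC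
      have h2 := (indepFun_iff_measure_inter_preimage_eq_mul.mp hI2) A B hA hB
      rw [e1, h1, ← e1, h2]
    -- Step 6: assemble mutual independence of (U', V', Z)
    have hIUVZ : iIndepFun (m := fun _ => (inferInstance : MeasurableSpace ℝ)) ![U', V', Z] ℙ := by
      rw [iIndepFun_iff_measure_inter_preimage_eq_mul]
      intro S sets hsets
      classical
      set g : Fin 3 → Set ℝ := fun i => if i ∈ S then sets i else univ with hg
      have hgm : ∀ i, MeasurableSet (g i) := by
        intro i
        by_cases hi : i ∈ S
        · simpa [hg, hi] using hsets i hi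
        · simp [hg, hi]
      have hIcap : (⋂ i ∈ S, ![U', V', Z] i ⁻¹' sets i) = ⋂ i, ![U', V', Z] i ⁻¹' g i := by
        ext ω
        simp only [mem_iInter, mem_preimage]
        constructor
        · intro h i
          by_cases hi : i ∈ S
          · simpa [hg, hi] using h i hi
          · simp [hg, hi]
        · intro h i hi
          simpa [hg, hi] using h i
      have hIall : (⋂ i, ![U', V', Z] i ⁻¹' g i)
          = U' ⁻¹' g 0 ∩ V' ⁻¹' g 1 ∩ Z ⁻¹' g 2 := by
        ext ω
        constructor
        · intro h
          exact ⟨⟨mem_iInter.1 h 0, mem_iInter.1 h 1⟩, mem_iInter.1 h 2⟩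
        · rintro ⟨⟨h0, h1⟩, h2⟩
          refine mem_iInter.2 fun i => ?_
          fin_cases i
          · exact h0
          · exact h1
          · exact h2
      have hone : ∀ i, ℙ (![U', V', Z] i ⁻¹' g i)
          = if i ∈ S then ℙ (![U', V', Z] i ⁻¹' sets i) else 1 := by
        intro i
        by_cases hi : i ∈ S <;> simp [hg, hi]
      have hprod : ∏ i ∈ S, ℙ (![U', V', Z] i ⁻¹' sets i)
          = ∏ i, ℙ (![U', V', Z] i ⁻¹' g i) := by
        rw [Finset.prod_congr rfl fun i _ => hone i, Finset.prod_ite_mem, Finset.univ_inter]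
      rw [hIcap, hIall, hprod, Fin.prod_univ_three]
      have m0 : ![U', V', Z] 0 = U' := rfl
      have m1 : ![U', V', Z] 1 = V' := rfl
      have m2 : ![U', V', Z] 2 = Z := rfl
      rw [m0, m1, m2]
      exact htriple _ _ _ (hgm 0) (hgm 1) (hgm 2)
    -- Step 7: transfer along a.e. equality
    rw [iIndepFun_iff_measure_inter_preimage_eq_mul] at hIUVZ ⊢
    intro S sets hsets
    have hae : ∀ i : Fin 3,
        ![fun ω => FXZ (X ω) (Z ω), fun ω => FYZ (Y ω) (Z ω), Z] i =ᵐ[ℙ] ![U', V', Z] i := by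
      intro i
      fin_cases i
      · exact hUae.symm
      · exact hVae.symm
      · exact Filter.EventuallyEq.rfl
    have haeall : ∀ᵐ ω ∂(ℙ : Measure Ω), ∀ i : Fin 3,
        ![fun ω => FXZ (X ω) (Z ω), fun ω => FYZ (Y ω) (Z ω), Z] i ω = ![U', V', Z] i ω :=
      ae_all_iff.mpr hae
    have h1 : ℙ (⋂ i ∈ S, ![fun ω => FXZ (X ω) (Z ω), fun ω => FYZ (Y ω) (Z ω), Z] i ⁻¹' sets i)
        = ℙ (⋂ i ∈ S, ![U', V', Z] i ⁻¹' sets i) := by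
      refine measure_congr ?_
      filter_upwards [haeall] with ω hω
      show (ω ∈ ⋂ i ∈ S, _ ⁻¹' sets i) = (ω ∈ ⋂ i ∈ S, _ ⁻¹' sets i)
      simp only [eq_iff_iff, mem_iInter, mem_preimage]
      constructor
      · intro h i hi
        rw [← hω i]
        exact h i hi
      · intro h i hi
        rw [hω i]
        exact h i hi
    have h2 : ∀ i ∈ S, ℙ (![fun ω => FXZ (X ω) (Z ω), fun ω => FYZ (Y ω) (Z ω), Z] i ⁻¹' sets i)
        = ℙ (![U', V', Z] i ⁻¹' sets i) := by
      intro i _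
      refine measure_congr ?_
      filter_upwards [haeall] with ω hω
      show (ω ∈ _ ⁻¹' sets i) = (ω ∈ _ ⁻¹' sets i)
      simp only [eq_iff_iff, mem_preimage, hω i]
    rw [h1, Finset.prod_congr rfl h2]
    exact hIUVZ S hsets
  · intro hI
    have hmeas3 : ∀ i : Fin 3,
        Measurable (![fun ω => FXZ (X ω) (Z ω), fun ω => FYZ (Y ω) (Z ω), Z] i) := by
      intro i
      fin_cases i
      · exact hUX
      · exact hUY
      · exact hZ
    have hpair : IndepFun
        (fun ω => (FXZ (X ω) (Z ω), FYZ (Y ω) (Z ω))) Z ℙ :=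
      hI.indepFun_prodMk hmeas3 0 1 2 (by decide) (by decide)
    have hUV : IndepFun (fun ω => FXZ (X ω) (Z ω)) (fun ω => FYZ (Y ω) (Z ω)) ℙ :=
      hI.indepFun (show (0 : Fin 3) ≠ 1 by decide)
    have hpairae : (fun ω => (FXZ (X ω) (Z ω), FYZ (Y ω) (Z ω)))
        =ᵐ[ℙ] fun ω => (U' ω, V' ω) := by
      filter_upwards [hUae, hVae] with ω h1 h2
      rw [h1, h2]
    have hI1' : IndepFun (fun ω => (U' ω, V' ω)) Z ℙ :=
      hpair.congr hpairae Filter.EventuallyEq.rfl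
    have hI2' : IndepFun U' V' ℙ := hUV.congr hUae.symm hVae.symm
    have hmapW : (ℙ : Measure Ω).map (fun ω => (U' ω, V' ω))
        = ((ℙ : Measure Ω).map U').prod ((ℙ : Measure Ω).map V') :=
      (indepFun_iff_map_prod_eq_prod_map_map hU'm.aemeasurable hV'm.aemeasurable).mp hI2'
    have hconst : ∀ᵐ z ∂((ℙ : Measure Ω).map Z),
        Kernel.const ℝ ((ℙ : Measure Ω).map (fun ω => (U' ω, V' ω))) z
          = condDistrib (fun ω => (U' ω, V' ω)) Z ℙ z := by
      refine (condDistrib_ae_eq_of_measure_eq_compProd Z (hU'm.prodMk hV'm).aemeasurable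
          (κ := Kernel.const ℝ ((ℙ : Measure Ω).map (fun ω => (U' ω, V' ω)))) ?_).symm
      rw [Measure.compProd_const]
      exact (indepFun_iff_map_prod_eq_prod_map_map hZ.aemeasurable
        (hU'm.prodMk hV'm).aemeasurable).mp hI1'.symm
    have hconstω : ∀ᵐ ω ∂(ℙ : Measure Ω),
        condDistrib (fun ω => (U' ω, V' ω)) Z ℙ (Z ω)
          = (ℙ : Measure Ω).map (fun ω => (U' ω, V' ω)) := by
      filter_upwards [ae_of_ae_map hZ.aemeasurable hconst] with ω h
      rw [← h, Kernel.const_apply]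
    have hcondCongr : ∀ {s t : Set Ω}, (∀ᵐ ω ∂(ℙ : Measure Ω), (ω ∈ s) = (ω ∈ t)) →
        ((ℙ : Measure Ω)⟦s | MeasurableSpace.comap Z inferInstance⟧
          =ᵐ[ℙ] (ℙ : Measure Ω)⟦t | MeasurableSpace.comap Z inferInstance⟧) := by
      intro s t h
      refine condExp_congr_ae ?_
      filter_upwards [h] with ω hω
      classical
      show s.indicator (fun _ => (1 : ℝ)) ω = t.indicator (fun _ => 1) ω
      rw [Set.indicator_apply, Set.indicator_apply, hω]
    rw [condIndepFun_iff_condIndep]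
    have hgenX : MeasurableSpace.comap X inferInstance
        = MeasurableSpace.generateFrom (preimage X '' (⋃ q : ℚ, {Iic (q : ℝ)})) := by
      conv_lhs => rw [show (inferInstance : MeasurableSpace ℝ)
        = MeasurableSpace.generateFrom (⋃ q : ℚ, {Iic (q : ℝ)})
        from Real.borel_eq_generateFrom_Iic_rat]
      rw [MeasurableSpace.comap_generateFrom]
    have hgenY : MeasurableSpace.comap Y inferInstance
        = MeasurableSpace.generateFrom (preimage Y '' (⋃ q : ℚ, {Iic (q : ℝ)})) := by
      conv_lhs => rw [show (inferInstance : MeasurableSpace ℝ)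
        = MeasurableSpace.generateFrom (⋃ q : ℚ, {Iic (q : ℝ)})
        from Real.borel_eq_generateFrom_Iic_rat]
      rw [MeasurableSpace.comap_generateFrom]
    refine CondIndepSets.condIndep hX.comap_le hY.comap_le
      (Real.isPiSystem_Iic_rat.comap _) (Real.isPiSystem_Iic_rat.comap _) hgenX hgenY ?_
    have hp1m : ∀ s ∈ preimage X '' (⋃ q : ℚ, {Iic (q : ℝ)}), MeasurableSet s := by
      rintro _ ⟨s, hs, rfl⟩
      simp only [mem_iUnion, mem_singleton_iff] at hs
      obtain ⟨q, rfl⟩ := hs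
      exact hX measurableSet_Iic
    have hp2m : ∀ s ∈ preimage Y '' (⋃ q : ℚ, {Iic (q : ℝ)}), MeasurableSet s := by
      rintro _ ⟨s, hs, rfl⟩
      simp only [mem_iUnion, mem_singleton_iff] at hs
      obtain ⟨q, rfl⟩ := hs
      exact hY measurableSet_Iic
    refine (condIndepSets_iff (MeasurableSpace.comap Z inferInstance) hZ.comap_le _ _ hp1m hp2m ℙ).mpr ?_
    intro t1 t2 ht1 ht2
    obtain ⟨s1, hs1, rfl⟩ := ht1
    obtain ⟨s2, hs2, rfl⟩ := ht2
    simp only [mem_iUnion, mem_singleton_iff] at hs1 hs2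
    obtain ⟨q, rfl⟩ := hs1
    obtain ⟨q', rfl⟩ := hs2
    -- the analytic core
    set A1 : Set (ℝ × (ℝ × ℝ)) := {p | p.2.1 ≤ (κX p.1 (Iic (q : ℝ))).toReal} with hA1_def
    set A2 : Set (ℝ × (ℝ × ℝ)) := {p | p.2.2 ≤ (κY p.1 (Iic (q' : ℝ))).toReal} with hA2_def
    have hA1 : MeasurableSet A1 :=
      measurableSet_le measurable_snd.fst
        (((Kernel.measurable_coe κX measurableSet_Iic).comp measurable_fst).ennreal_toReal)
    have hA2 : MeasurableSet A2 :=
      measurableSet_le measurable_snd.snd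
        (((Kernel.measurable_coe κY measurableSet_Iic).comp measurable_fst).ennreal_toReal)
    have hsetX : ∀ᵐ ω ∂(ℙ : Measure Ω), (ω ∈ X ⁻¹' Iic (q : ℝ))
        = (ω ∈ (fun ω => (Z ω, (U' ω, V' ω))) ⁻¹' A1) := by
      filter_upwards [hGFX] with ω hω
      have e1 : U' ω = FXZ (X ω) (Z ω) := hω (X ω)
      have e2 : (κX (Z ω) (Iic (q : ℝ))).toReal = FXZ (q : ℝ) (Z ω) := hω q
      simp only [eq_iff_iff, mem_preimage, mem_Iic]
      show X ω ≤ (q : ℝ) ↔ U' ω ≤ (κX (Z ω) (Iic (q : ℝ))).toReal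
      rw [e1, e2]
      exact ((hFXZ (Z ω)).2.le_iff_le).symm
    have hsetY : ∀ᵐ ω ∂(ℙ : Measure Ω), (ω ∈ Y ⁻¹' Iic (q' : ℝ))
        = (ω ∈ (fun ω => (Z ω, (U' ω, V' ω))) ⁻¹' A2) := by
      filter_upwards [hGFY] with ω hω
      have e1 : V' ω = FYZ (Y ω) (Z ω) := hω (Y ω)
      have e2 : (κY (Z ω) (Iic (q' : ℝ))).toReal = FYZ (q' : ℝ) (Z ω) := hω q'
      simp only [eq_iff_iff, mem_preimage, mem_Iic]
      show Y ω ≤ (q' : ℝ) ↔ V' ω ≤ (κY (Z ω) (Iic (q' : ℝ))).toReal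
      rw [e1, e2]
      exact ((hFYZ (Z ω)).2.le_iff_le).symm
    haveI hPU : IsProbabilityMeasure ((ℙ : Measure Ω).map U') :=
      Measure.isProbabilityMeasure_map hU'm.aemeasurable
    haveI hPV : IsProbabilityMeasure ((ℙ : Measure Ω).map V') :=
      Measure.isProbabilityMeasure_map hV'm.aemeasurable
    have hKey12 : (ℙ : Measure Ω)⟦X ⁻¹' Iic (q : ℝ) ∩ Y ⁻¹' Iic (q' : ℝ) |
          MeasurableSpace.comap Z inferInstance⟧
        =ᵐ[ℙ] fun ω => (((ℙ : Measure Ω).map U') (Iic ((κX (Z ω) (Iic (q : ℝ))).toReal))).toReal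
          * (((ℙ : Measure Ω).map V') (Iic ((κY (Z ω) (Iic (q' : ℝ))).toReal))).toReal := by
      have hcongr : (ℙ : Measure Ω)⟦X ⁻¹' Iic (q : ℝ) ∩ Y ⁻¹' Iic (q' : ℝ) |
            MeasurableSpace.comap Z inferInstance⟧
          =ᵐ[ℙ] (ℙ : Measure Ω)⟦(fun ω => (Z ω, (U' ω, V' ω))) ⁻¹' (A1 ∩ A2) |
            MeasurableSpace.comap Z inferInstance⟧ := by
        refine hcondCongr ?_
        filter_upwards [hsetX, hsetY] with ω h1 h2
        simp only [eq_iff_iff, mem_inter_iff, mem_preimage] at h1 h2 ⊢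
        rw [h1, h2]
      refine hcongr.trans ?_
      refine (condexp_mem_prod_ae_eq hZ (hU'm.prodMk hV'm) (hA1.inter hA2)).trans ?_
      filter_upwards [hconstω] with ω hω
      have hsec : {e : ℝ × ℝ | (Z ω, e) ∈ A1 ∩ A2}
          = Iic ((κX (Z ω) (Iic (q : ℝ))).toReal) ×ˢ Iic ((κY (Z ω) (Iic (q' : ℝ))).toReal) :=
        rfl
      rw [hω, hsec, hmapW, Measure.prod_prod, ENNReal.toReal_mul]
    have hKey1 : (ℙ : Measure Ω)⟦X ⁻¹' Iic (q : ℝ) | MeasurableSpace.comap Z inferInstance⟧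
        =ᵐ[ℙ] fun ω =>
          (((ℙ : Measure Ω).map U') (Iic ((κX (Z ω) (Iic (q : ℝ))).toReal))).toReal := by
      refine (hcondCongr hsetX).trans ?_
      refine (condexp_mem_prod_ae_eq hZ (hU'm.prodMk hV'm) hA1).trans ?_
      filter_upwards [hconstω] with ω hω
      have hsec : {e : ℝ × ℝ | (Z ω, e) ∈ A1}
          = Iic ((κX (Z ω) (Iic (q : ℝ))).toReal) ×ˢ univ := by
        ext e
        simp [hA1_def]
      rw [hω, hsec, hmapW, Measure.prod_prod, measure_univ, mul_one]
    have hKey2 : (ℙ : Measure Ω)⟦Y ⁻¹' Iic (q' : ℝ) | MeasurableSpace.comap Z inferInstance⟧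
        =ᵐ[ℙ] fun ω =>
          (((ℙ : Measure Ω).map V') (Iic ((κY (Z ω) (Iic (q' : ℝ))).toReal))).toReal := by
      refine (hcondCongr hsetY).trans ?_
      refine (condexp_mem_prod_ae_eq hZ (hU'm.prodMk hV'm) hA2).trans ?_
      filter_upwards [hconstω] with ω hω
      have hsec : {e : ℝ × ℝ | (Z ω, e) ∈ A2}
          = univ ×ˢ Iic ((κY (Z ω) (Iic (q' : ℝ))).toReal) := by
        ext e
        simp [hA2_def]
      rw [hω, hsec, hmapW, Measure.prod_prod, measure_univ, one_mul]
    filter_upwards [hKey12, hKey1, hKey2] with ω e e1 e2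
    rw [e, Pi.mul_apply, e1, e2]
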